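/- Let k be a field in which -1 is a sum of squares. Then the smallest natural number r such that -1 is a sum of r squares in k (the level of k) is a power of 2. -/

import Mathlib

open Matrix Finset

section pfister
variable {k : Type*} [Field k]

/-- `x` is a sum of `r` squares. -/
private def SOS (k : Type*) [Field k] (r : ℕ) (x : k) : Prop :=
  ∃ f : Fin r → k, x = ∑ i, f i ^ 2

private lemma SOS_congr {a b : ℕ} (h : a = b) {x : k} (hx : SOS k a x) : SOS k b x := h ▸ hx

private lemma SOS_add {a b : ℕ} {x y : k} (hx : SOS k a x) (hy : SOS k b y) :
    SOS k (a + b) (x + y) := by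
  obtain ⟨f, rfl⟩ := hx; obtain ⟨g, rfl⟩ := hy
  exact ⟨Fin.append f g, by rw [Fin.sum_univ_add]; simp⟩

private lemma SOS_zero (r : ℕ) : SOS k r 0 := ⟨0, by simp⟩

private lemma SOS_one (r : ℕ) (hr : 1 ≤ r) : SOS k r 1 := by
  have h := SOS_add (⟨fun _ => 1, by simp⟩ : SOS k 1 1) (SOS_zero (k := k) (r - 1))
  rw [add_zero] at h
  exact SOS_congr (by omega) h

private lemma SOS_mono {a b : ℕ} {x : k} (hab : a ≤ b) (hx : SOS k a x) : SOS k b x := by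
  have h := SOS_add hx (SOS_zero (k := k) (b - a))
  rw [add_zero] at h
  exact SOS_congr (by omega) h

private lemma SOS_split {a b : ℕ} {x : k} (hx : SOS k (a + b) x) :
    ∃ y z, x = y + z ∧ SOS k a y ∧ SOS k b z := by
  obtain ⟨f, rfl⟩ := hx
  exact ⟨∑ i : Fin a, f (Fin.castAdd b i) ^ 2, ∑ i : Fin b, f (Fin.natAdd a i) ^ 2,
    Fin.sum_univ_add _, ⟨_, rfl⟩, ⟨_, rfl⟩⟩

/-- `x` is a similarity factor of the sum-of-squares form on `ι`. -/
private def Sim (k : Type*) [Field k] (ι : Type) [Fintype ι] [DecidableEq ι] (x : k) : Prop :=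
  ∃ A : Matrix ι ι k, Aᵀ * A = x • (1 : Matrix ι ι k)

variable {ι κ : Type} [Fintype ι] [DecidableEq ι] [Fintype κ] [DecidableEq κ]

private lemma Sim_mul {x y : k} (hx : Sim k ι x) (hy : Sim k ι y) : Sim k ι (x * y) := by
  obtain ⟨A, hA⟩ := hx; obtain ⟨B, hB⟩ := hy
  refine ⟨A * B, ?_⟩
  rw [transpose_mul, mul_assoc, ← mul_assoc Aᵀ, hA, smul_mul_assoc, one_mul, mul_smul_comm, hB,
    smul_smul]

private lemma Sim_sq (a : k) : Sim k ι (a ^ 2) :=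
  ⟨a • 1, by rw [transpose_smul, transpose_one, smul_mul_smul_comm, one_mul, sq]⟩

private lemma Sim_reindex (e : ι ≃ κ) {x : k} (hx : Sim k ι x) : Sim k κ x := by
  obtain ⟨A, hA⟩ := hx
  refine ⟨A.submatrix e.symm e.symm, ?_⟩
  rw [transpose_submatrix, submatrix_mul_equiv, hA]
  simp [Matrix.submatrix_smul, submatrix_one_equiv]

private def G (k : Type*) [Field k] (n : ℕ) (x : k) : Prop := Sim k (Fin (2 ^ n)) x

private lemma two_pow_succ' (n : ℕ) : 2 ^ n + 2 ^ n = 2 ^ (n + 1) := by rw [pow_succ]; ring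

private lemma Sim_sum_fin {n : ℕ} {x : k} (hx : Sim k (Fin (2 ^ n) ⊕ Fin (2 ^ n)) x) :
    G k (n + 1) x :=
  Sim_reindex (finSumFinEquiv.trans (finCongr (two_pow_succ' n))) hx

private lemma G_double {n : ℕ} {x : k} (hx : G k n x) : G k (n + 1) x := by
  obtain ⟨A, hA⟩ := hx
  refine Sim_sum_fin ⟨fromBlocks A 0 0 A, ?_⟩
  rw [fromBlocks_transpose, fromBlocks_multiply]
  simp [hA, ← Matrix.fromBlocks_one, Matrix.fromBlocks_smul]

private lemma G_one_add {n : ℕ} {e : k} (he : G k n e) (he0 : e ≠ 0) : G k (n + 1) (1 + e) := by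
  obtain ⟨E, hE⟩ := he
  have h1 : (e⁻¹ • Eᵀ) * E = 1 := by
    rw [smul_mul_assoc, hE, smul_smul, inv_mul_cancel₀ he0, one_smul]
  have h2 : E * Eᵀ = e • 1 := by
    have h3 := mul_eq_one_comm.mp h1
    rw [mul_smul_comm] at h3
    calc E * Eᵀ = e • (e⁻¹ • (E * Eᵀ)) := by
          rw [smul_smul, mul_inv_cancel₀ he0, one_smul]
      _ = e • (1 : Matrix _ _ k) := by rw [h3]
  refine Sim_sum_fin ⟨fromBlocks 1 E (-Eᵀ) 1, ?_⟩
  rw [fromBlocks_transpose, fromBlocks_multiply]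
  simp only [transpose_one, transpose_neg, transpose_transpose, Matrix.one_mul, Matrix.mul_one,
    Matrix.neg_mul, Matrix.mul_neg, neg_neg, add_neg_cancel, h2, hE]
  have e1 : (1 : Matrix (Fin (2 ^ n)) (Fin (2 ^ n)) k) + e • 1 = (1 + e) • 1 := by
    rw [add_smul, one_smul]
  have e2 : e • (1 : Matrix (Fin (2 ^ n)) (Fin (2 ^ n)) k) + 1 = (1 + e) • 1 := by
    rw [add_smul, one_smul, add_comm]
  rw [e1, e2, ← Matrix.fromBlocks_one (l := Fin (2 ^ n)) (m := Fin (2 ^ n)),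
    Matrix.fromBlocks_smul, smul_zero]

private lemma G_to_SOS {n : ℕ} {x : k} (hx : G k n x) : SOS k (2 ^ n) x := by
  obtain ⟨A, hA⟩ := hx
  have hpos : 0 < 2 ^ n := pow_pos (by norm_num) n
  set i : Fin (2 ^ n) := ⟨0, hpos⟩
  refine ⟨fun j => A j i, ?_⟩
  have h := congrFun (congrFun hA i) i
  simp only [Matrix.mul_apply, Matrix.transpose_apply, Matrix.smul_apply, Matrix.one_apply_eq,
    smul_eq_mul, mul_one] at h
  rw [← h]
  exact Finset.sum_congr rfl fun j _ => (sq _).symm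

private lemma SOS_to_G : ∀ n : ℕ, ∀ x : k, SOS k (2 ^ n) x → x ≠ 0 → G k n x := by
  intro n
  induction n with
  | zero =>
    intro x hx _
    obtain ⟨f, rfl⟩ := SOS_congr (pow_zero 2) hx
    rw [Fin.sum_univ_one]
    exact Sim_sq (f 0)
  | succ n ih =>
    intro x hx hx0
    obtain ⟨c, d, rfl, hc, hd⟩ := SOS_split (SOS_congr (two_pow_succ' n).symm hx)
    by_cases hc0 : c = 0
    · subst hc0; rw [zero_add] at hx0 ⊢
      exact G_double (ih d hd hx0)
    by_cases hd0 : d = 0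
    · subst hd0; rw [add_zero] at hx0 ⊢
      exact G_double (ih c hc hx0)
    have hgc := ih c hc hc0
    have hgd := ih d hd hd0
    have hge : G k n (d * c⁻¹) := by
      have h := Sim_mul (Sim_mul hgd hgc) (Sim_sq c⁻¹)
      have : d * c * c⁻¹ ^ 2 = d * c⁻¹ := by field_simp
      rwa [this] at h
    have he0 : d * c⁻¹ ≠ 0 := mul_ne_zero hd0 (inv_ne_zero hc0)
    have key := Sim_mul (G_double hgc) (G_one_add hge he0)
    have : c * (1 + d * c⁻¹) = c + d := by field_simp
    rwa [this] at key

end pfister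

/-- Pfister: if `-1` is a sum of squares in a field `k`, then the level of `k`
(the least number `r ≥ 1` such that `-1` is a sum of `r` squares) is a power of `2`. -/
theorem stmt1 (k : Type*) [Field k]
    (h : ∃ r : ℕ, 1 ≤ r ∧ ∃ f : Fin r → k, (-1 : k) = ∑ i, f i ^ 2) :
    ∃ n : ℕ, sInf {r : ℕ | 1 ≤ r ∧ ∃ f : Fin r → k, (-1 : k) = ∑ i, f i ^ 2} = 2 ^ n := by
  set S : Set ℕ := {r : ℕ | 1 ≤ r ∧ ∃ f : Fin r → k, (-1 : k) = ∑ i, f i ^ 2} with hSdef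
  have hS : S.Nonempty := h
  set s := sInf S with hs
  obtain ⟨hs1, f, hf⟩ := Nat.sInf_mem hS
  set n := Nat.log 2 s with hn
  have h1 : 2 ^ n ≤ s := Nat.pow_log_le_self 2 (by omega)
  have h2 : s < 2 ^ (n + 1) := Nat.lt_pow_succ_log_self (by norm_num) s
  have hm1 : 1 ≤ 2 ^ n := Nat.one_le_two_pow
  refine ⟨n, le_antisymm ?_ h1⟩
  -- split `-1 = p + q` with `p` a sum of `2^n - 1` squares
  have hsos : SOS k ((2 ^ n - 1) + (s - (2 ^ n - 1))) (-1) :=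
    SOS_congr (by omega) (⟨f, hf⟩ : SOS k s (-1))
  obtain ⟨p, q, hpq, hp, hq⟩ := SOS_split hsos
  by_cases hc0 : (1 : k) + p = 0
  · -- then `-1` is a sum of `2^n - 1` squares, contradicting minimality
    have hpneg : p = -1 := by linear_combination hc0
    subst hpneg
    rcases Nat.lt_or_ge (2 ^ n - 1) 1 with h' | h'
    · -- `2^n = 1`: then `-1 = 0`, absurd
      obtain ⟨g, hg⟩ := SOS_congr (show 2 ^ n - 1 = 0 by omega) hp
      simp only [Finset.univ_eq_empty, Finset.sum_empty] at hg
      exact absurd (neg_eq_zero.mp hg) one_ne_zero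
    · have hmem : 2 ^ n - 1 ∈ S := ⟨h', hp⟩
      have := Nat.sInf_le hmem
      omega
  · -- main case: use Pfister's group argument
    have hc : SOS k (2 ^ n) ((1 : k) + p) :=
      SOS_congr (by omega) (SOS_add (SOS_one 1 le_rfl) hp)
    have hdq : q = -(1 + p) := by linear_combination -hpq
    have hd : SOS k (2 ^ n) (-(1 + p)) := hdq ▸ SOS_mono (by omega) hq
    have hgc := SOS_to_G n _ hc hc0
    have hgd := SOS_to_G n _ hd (neg_ne_zero.mpr hc0)
    have hg : G k n (-1) := by
      have h := Sim_mul (Sim_mul hgd hgc) (Sim_sq (1 + p)⁻¹)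
      have : -(1 + p) * (1 + p) * ((1 + p)⁻¹) ^ 2 = -1 := by field_simp
      rwa [this] at h
    obtain ⟨g, hg⟩ := G_to_SOS hg
    exact Nat.sInf_le ⟨hm1, g, hg⟩
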